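/- Let X = ℓ²(ℤ, ℂ) with orthonormal basis (e_n)_{n∈ℤ}, and let S be the bilateral weighted backward shift determined by S e_n = 2√2 · e_{n−1} for n ≥ 1 and S e_n = (1/(2√2)) · e_{n−1} for n ≤ 0. Then S is an invertible bounded linear operator that has the shadowing property, but S is not uniformly expansive and S is not hyperbolic. -/

import Mathlib

open Filter Topology
open scoped ENNReal NNReal
noncomputable section

/-- `T` has the shadowing property. -/
def ShadowingProperty {Y : Type*} [NormedAddCommGroup Y] [NormedSpace ℂ Y]
    (T : (Y →L[ℂ] Y)ˣ) : Prop :=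
  ∀ ε > (0 : ℝ), ∃ δ > (0 : ℝ), ∀ x : ℤ → Y,
    (∀ n : ℤ, ‖x (n + 1) - (T : Y →L[ℂ] Y) (x n)‖ ≤ δ) →
      ∃ y : Y, ∀ n : ℤ, ‖x n - ((T ^ n : (Y →L[ℂ] Y)ˣ) : Y →L[ℂ] Y) y‖ ≤ ε

/-- An invertible operator `S` is uniformly expansive if there is a positive integer `n`
such that every unit vector `x` satisfies `‖Sⁿ x‖ ≥ 2` or `‖S⁻ⁿ x‖ ≥ 2`. -/
def UniformlyExpansive {Y : Type*} [NormedAddCommGroup Y] [NormedSpace ℂ Y]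
    (S : (Y →L[ℂ] Y)ˣ) : Prop :=
  ∃ n : ℕ, 0 < n ∧ ∀ x : Y, ‖x‖ = 1 →
    2 ≤ ‖((S ^ (n : ℤ) : (Y →L[ℂ] Y)ˣ) : Y →L[ℂ] Y) x‖ ∨
    2 ≤ ‖((S ^ (-(n : ℤ)) : (Y →L[ℂ] Y)ˣ) : Y →L[ℂ] Y) x‖

/-- An invertible operator `T` is hyperbolic if `X = M ⊕ N` for closed `T`-invariant
subspaces with the restrictions of `T` to `M` and of `T⁻¹` to `N` of spectral radius
less than one. -/
def Hyperbolic {Y : Type*} [NormedAddCommGroup Y] [NormedSpace ℂ Y]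
    (T : (Y →L[ℂ] Y)ˣ) : Prop :=
  ∃ M N : Submodule ℂ Y, IsClosed (M : Set Y) ∧ IsClosed (N : Set Y) ∧ IsCompl M N ∧
    Submodule.map ((T : Y →L[ℂ] Y) : Y →ₗ[ℂ] Y) M = M ∧
    Submodule.map ((T : Y →L[ℂ] Y) : Y →ₗ[ℂ] Y) N = N ∧
    ∃ (A : M →L[ℂ] M) (B : N →L[ℂ] N),
      (∀ m : M, (A m : Y) = (T : Y →L[ℂ] Y) (m : Y)) ∧
      (∀ v : N, (B v : Y) = ((T⁻¹ : (Y →L[ℂ] Y)ˣ) : Y →L[ℂ] Y) (v : Y)) ∧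
      spectralRadius ℂ A < 1 ∧ spectralRadius ℂ B < 1

/-- The standard orthonormal basis vectors of `ℓ²(ℤ, ℂ)`. -/
def e (n : ℤ) : lp (fun _ : ℤ => ℂ) 2 := lp.single 2 n 1
namespace BWS

abbrev H : Type := lp (fun _ : ℤ => ℂ) 2

lemma htr : (0:ℝ) < (2 : ℝ≥0∞).toReal := by norm_num

lemma summable_sq (x : H) : Summable (fun m : ℤ => ‖x m‖ ^ (2 : ℝ≥0∞).toReal) :=
  (lp.memℓp x).summable htr

lemma summable_sq_shift (x : H) (k : ℤ) :
    Summable (fun m : ℤ => ‖x (m + k)‖ ^ (2 : ℝ≥0∞).toReal) :=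
  ((Equiv.addRight k).summable_iff (f := fun m : ℤ => ‖x m‖ ^ (2 : ℝ≥0∞).toReal)).mpr
    (summable_sq x)

lemma tsum_sq_shift (x : H) (k : ℤ) :
    ∑' m : ℤ, ‖x (m + k)‖ ^ (2 : ℝ≥0∞).toReal = ∑' m : ℤ, ‖x m‖ ^ (2 : ℝ≥0∞).toReal :=
  (Equiv.addRight k).tsum_eq (fun m : ℤ => ‖x m‖ ^ (2 : ℝ≥0∞).toReal)

lemma norm_le_of_coord {y x : H} {C : ℝ} (hC : 0 ≤ C) (k : ℤ)
    (h : ∀ m : ℤ, ‖y m‖ ≤ C * ‖x (m + k)‖) : ‖y‖ ≤ C * ‖x‖ := by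
  have ht : (0:ℝ) ≤ (2 : ℝ≥0∞).toReal := htr.le
  have h1 : ‖y‖ ^ (2 : ℝ≥0∞).toReal ≤ (C * ‖x‖) ^ (2 : ℝ≥0∞).toReal := by
    rw [lp.norm_rpow_eq_tsum htr y]
    have h2 : ∑' m : ℤ, ‖y m‖ ^ (2 : ℝ≥0∞).toReal
        ≤ ∑' m : ℤ, (C * ‖x (m + k)‖) ^ (2 : ℝ≥0∞).toReal := by
      apply Summable.tsum_le_tsum _ (summable_sq y)
      · have := (summable_sq_shift x k).mul_left (C ^ (2 : ℝ≥0∞).toReal)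
        apply this.congr
        intro m
        rw [← Real.mul_rpow hC (norm_nonneg _)]
      · intro m
        exact Real.rpow_le_rpow (norm_nonneg _) (h m) ht
    refine h2.trans (le_of_eq ?_)
    rw [Real.mul_rpow hC (norm_nonneg _), lp.norm_rpow_eq_tsum htr x,
      ← tsum_sq_shift x k, ← tsum_mul_left]
    apply tsum_congr; intro m
    rw [Real.mul_rpow hC (norm_nonneg _)]
  have h3 : ‖y‖ ^ (2:ℕ) ≤ (C * ‖x‖) ^ (2:ℕ) := by
    have e : ((2:ℝ≥0∞).toReal) = ((2:ℕ):ℝ) := by norm_num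
    rw [e, Real.rpow_natCast, Real.rpow_natCast] at h1
    exact h1
  exact (pow_le_pow_iff_left₀ (norm_nonneg _) (by positivity) (by norm_num)).mp h3

lemma memℓp_shift (c : ℤ → ℂ) (C : ℝ) (hc : ∀ m, ‖c m‖ ≤ C) (k : ℤ) (x : H) :
    Memℓp (fun m => c m * x (m + k)) 2 := by
  have hC : 0 ≤ C := le_trans (norm_nonneg _) (hc 0)
  apply memℓp_gen
  have := (summable_sq_shift x k).mul_left (C ^ (2 : ℝ≥0∞).toReal)
  apply Summable.of_nonneg_of_le (fun m => Real.rpow_nonneg (norm_nonneg _) _) _ this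
  intro m
  rw [← Real.mul_rpow hC (norm_nonneg _)]
  apply Real.rpow_le_rpow (norm_nonneg _) _ htr.le
  rw [norm_mul]
  exact mul_le_mul_of_nonneg_right (hc m) (norm_nonneg _)

def shiftOp (c : ℤ → ℂ) (C : ℝ) (hc : ∀ m, ‖c m‖ ≤ C) (k : ℤ) : H →L[ℂ] H :=
  LinearMap.mkContinuous
    { toFun := fun x => (⟨fun m => c m * x (m + k), memℓp_shift c C hc k x⟩ : H)
      map_add' := by
        intro x y; apply lp.ext; funext m
        simp only [lp.coeFn_add, Pi.add_apply]
        ring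
      map_smul' := by
        intro a x; apply lp.ext; funext m
        simp only [lp.coeFn_smul, Pi.smul_apply, RingHom.id_apply, smul_eq_mul]
        ring }
    C
    (by
      intro x
      refine norm_le_of_coord (le_trans (norm_nonneg _) (hc 0)) k ?_
      intro m
      simp only [LinearMap.coe_mk, AddHom.coe_mk]
      rw [norm_mul]
      exact mul_le_mul_of_nonneg_right (hc m) (norm_nonneg _))

@[simp] lemma shiftOp_apply (c : ℤ → ℂ) (C : ℝ) (hc : ∀ m, ‖c m‖ ≤ C) (k : ℤ) (x : H) (m : ℤ) :
    shiftOp c C hc k x m = c m * x (m + k) := rfl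


def sq2 : ℝ := 2 * Real.sqrt 2

lemma sq2_ge : 2 ≤ sq2 := by
  have h := Real.sq_sqrt (by norm_num : (2:ℝ) ≥ 0)
  have h0 := Real.sqrt_nonneg 2
  unfold sq2; nlinarith

lemma sq2_pos : 0 < sq2 := lt_of_lt_of_le (by norm_num) sq2_ge

lemma sq2_le : sq2 ≤ 3 := by
  have h := Real.sq_sqrt (by norm_num : (2:ℝ) ≥ 0)
  have h0 := Real.sqrt_nonneg 2
  unfold sq2; nlinarith

lemma sq2_inv_le : sq2⁻¹ ≤ 1/2 := by
  rw [inv_le_comm₀ sq2_pos (by norm_num)]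
  simpa using sq2_ge

def w (n : ℤ) : ℝ := if 1 ≤ n then sq2 else sq2⁻¹

lemma w_pos (n : ℤ) : 0 < w n := by
  unfold w; split
  · exact sq2_pos
  · exact inv_pos.mpr sq2_pos

lemma w_norm (n : ℤ) : ‖((w n : ℝ) : ℂ)‖ ≤ 3 := by
  rw [Complex.norm_real, Real.norm_eq_abs, abs_of_pos (w_pos n)]
  unfold w; split
  · exact sq2_le
  · exact le_trans sq2_inv_le (by norm_num)

lemma w_inv_norm (n : ℤ) : ‖(((w n)⁻¹ : ℝ) : ℂ)‖ ≤ 3 := by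
  rw [Complex.norm_real, Real.norm_eq_abs, abs_of_pos (inv_pos.mpr (w_pos n))]
  unfold w; split
  · exact le_trans sq2_inv_le (by norm_num)
  · rw [inv_inv]; exact sq2_le

lemma w_neg_le {n : ℤ} (h : n ≤ 0) : w n ≤ 1/2 := by
  unfold w; rw [if_neg (by omega)]; exact sq2_inv_le

lemma w_inv_pos_le {n : ℤ} (h : 1 ≤ n) : (w n)⁻¹ ≤ 1/2 := by
  unfold w; rw [if_pos h]; exact sq2_inv_le

def Sop : H →L[ℂ] H := shiftOp (fun m => ((w (m+1) : ℝ) : ℂ)) 3 (fun m => w_norm (m+1)) 1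

def Top : H →L[ℂ] H := shiftOp (fun m => (((w m)⁻¹ : ℝ) : ℂ)) 3 (fun m => w_inv_norm m) (-1)

lemma Sop_apply (x : H) (m : ℤ) : Sop x m = ((w (m+1) : ℝ) : ℂ) * x (m+1) := rfl

lemma Top_apply (x : H) (m : ℤ) : Top x m = (((w m)⁻¹ : ℝ) : ℂ) * x (m - 1) := by
  rw [sub_eq_add_neg]; rfl

lemma Top_Sop (x : H) : Top (Sop x) = x := by
  apply lp.ext; funext m
  rw [Top_apply, Sop_apply]
  rw [sub_add_cancel, ← mul_assoc,
    show (((w m)⁻¹ : ℝ) : ℂ) * ((w m : ℝ) : ℂ) = 1 by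
      rw [← Complex.ofReal_mul, inv_mul_cancel₀ (w_pos m).ne', Complex.ofReal_one],
    one_mul]

lemma Sop_Top (x : H) : Sop (Top x) = x := by
  apply lp.ext; funext m
  rw [Sop_apply, Top_apply]
  rw [add_sub_cancel_right, ← mul_assoc,
    show ((w (m+1) : ℝ) : ℂ) * (((w (m+1))⁻¹ : ℝ) : ℂ) = 1 by
      rw [← Complex.ofReal_mul, mul_inv_cancel₀ (w_pos (m+1)).ne', Complex.ofReal_one],
    one_mul]

def U : (H →L[ℂ] H)ˣ where
  val := Sop
  inv := Top
  val_inv := by ext x; simp [ContinuousLinearMap.mul_apply, Sop_Top, ContinuousLinearMap.one_apply]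
  inv_val := by ext x; simp [ContinuousLinearMap.mul_apply, Top_Sop, ContinuousLinearMap.one_apply]

lemma e_apply (n m : ℤ) : (e n) m = if m = n then 1 else 0 := by
  by_cases h : m = n <;> simp [e, lp.single_apply, h]

lemma e_norm (n : ℤ) : ‖e n‖ = 1 := by
  have := lp.norm_single (E := fun _ : ℤ => ℂ) (p := 2) (by norm_num) n (1:ℂ)
  rw [e]
  simpa using this

lemma single_eq_smul_e (n : ℤ) (a : ℂ) : lp.single 2 n a = a • e n := by
  rw [e, ← lp.single_smul]
  congr
  simp

lemma Sop_e (n : ℤ) : Sop (e n) = ((w n : ℝ) : ℂ) • e (n - 1) := by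
  apply lp.ext; funext m
  rw [Sop_apply]
  rw [lp.coeFn_smul, Pi.smul_apply, e_apply, e_apply, smul_eq_mul]
  by_cases h : m = n - 1
  · have hn : m + 1 = n := by omega
    simp [hn, h]
  · simp [h, show ¬ (m + 1 = n) by omega]

lemma S_eq_Sop (S : H →L[ℂ] H) (hS : ∀ n : ℤ, S (e n) = ((w n : ℝ) : ℂ) • e (n-1)) :
    S = Sop := by
  refine ContinuousLinearMap.ext fun x => ?_
  have hx : HasSum (fun n : ℤ => lp.single 2 n (x n)) x :=
    lp.hasSum_single (by norm_num) x
  have h1 : HasSum (fun n : ℤ => S (lp.single 2 n (x n))) (S x) := hx.mapL S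
  have h2 : HasSum (fun n : ℤ => Sop (lp.single 2 n (x n))) (Sop x) := hx.mapL Sop
  have heq : (fun n : ℤ => S (lp.single 2 n (x n))) = (fun n : ℤ => Sop (lp.single 2 n (x n))) := by
    funext n
    rw [single_eq_smul_e, map_smul, map_smul, hS n, Sop_e n]
  exact h1.unique (heq ▸ h2)


def NegS (x : H) : Prop := ∀ m : ℤ, 1 ≤ m → x m = 0
def PosS (x : H) : Prop := ∀ m : ℤ, m ≤ 0 → x m = 0

def Pop : H →L[ℂ] H :=
  shiftOp (fun m => if m ≤ 0 then 1 else 0) 1 (by intro m; split <;> simp) 0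
def Qop : H →L[ℂ] H :=
  shiftOp (fun m => if 1 ≤ m then 1 else 0) 1 (by intro m; split <;> simp) 0

lemma Pop_apply (x : H) (m : ℤ) : Pop x m = if m ≤ 0 then x m else 0 := by
  show (if m ≤ 0 then (1:ℂ) else 0) * x (m + 0) = _
  rw [add_zero]; split <;> simp

lemma Qop_apply (x : H) (m : ℤ) : Qop x m = if 1 ≤ m then x m else 0 := by
  show (if 1 ≤ m then (1:ℂ) else 0) * x (m + 0) = _
  rw [add_zero]; split <;> simp

lemma Pop_add_Qop (x : H) : Pop x + Qop x = x := by
  apply lp.ext; funext m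
  rw [lp.coeFn_add, Pi.add_apply, Pop_apply, Qop_apply]
  by_cases h : m ≤ 0
  · rw [if_pos h, if_neg (by omega)]; ring
  · rw [if_neg h, if_pos (by omega)]; ring

lemma negS_Pop (x : H) : NegS (Pop x) := by
  intro m hm; rw [Pop_apply, if_neg (by omega)]

lemma posS_Qop (x : H) : PosS (Qop x) := by
  intro m hm; rw [Qop_apply, if_neg (by omega)]

lemma Pop_norm (x : H) : ‖Pop x‖ ≤ ‖x‖ := by
  have := norm_le_of_coord (y := Pop x) (x := x) (C := 1) zero_le_one 0 ?_
  · simpa using this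
  · intro m
    rw [Pop_apply, add_zero, one_mul]
    split
    · exact le_refl _
    · simp

lemma Qop_norm (x : H) : ‖Qop x‖ ≤ ‖x‖ := by
  have := norm_le_of_coord (y := Qop x) (x := x) (C := 1) zero_le_one 0 ?_
  · simpa using this
  · intro m
    rw [Qop_apply, add_zero, one_mul]
    split
    · exact le_refl _
    · simp

lemma Sop_negS {x : H} (h : NegS x) : NegS (Sop x) := by
  intro m hm
  rw [Sop_apply, h (m+1) (by omega), mul_zero]

lemma Sop_negS_norm {x : H} (h : NegS x) : ‖Sop x‖ ≤ (1/2) * ‖x‖ := by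
  refine norm_le_of_coord (by norm_num) 1 ?_
  intro m
  rw [Sop_apply]
  by_cases hm : m + 1 ≤ 0
  · rw [norm_mul, Complex.norm_real, Real.norm_eq_abs, abs_of_pos (w_pos _)]
    exact mul_le_mul_of_nonneg_right (w_neg_le hm) (norm_nonneg _)
  · rw [h (m+1) (by omega), mul_zero, norm_zero]
    positivity

lemma Top_posS {x : H} (h : PosS x) : PosS (Top x) := by
  intro m hm
  rw [Top_apply, h (m-1) (by omega), mul_zero]

lemma Top_posS_norm {x : H} (h : PosS x) : ‖Top x‖ ≤ (1/2) * ‖x‖ := by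
  refine norm_le_of_coord (by norm_num) (-1) ?_
  intro m
  rw [show m + (-1) = m - 1 by ring, Top_apply]
  by_cases hm : 1 ≤ m - 1
  · rw [norm_mul, Complex.norm_real, Real.norm_eq_abs, abs_of_pos (inv_pos.mpr (w_pos _))]
    exact mul_le_mul_of_nonneg_right (w_inv_pos_le (by omega)) (norm_nonneg _)
  · rw [h (m-1) (by omega), mul_zero, norm_zero]
    positivity

lemma Sop_pow_negS {x : H} (h : NegS x) (k : ℕ) :
    NegS ((Sop ^ k) x) ∧ ‖(Sop ^ k) x‖ ≤ (1/2)^k * ‖x‖ := by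
  induction k with
  | zero =>
    have h0 : (Sop ^ 0) x = x := by rw [pow_zero]; rfl
    rw [h0]; exact ⟨h, by norm_num⟩
  | succ k ih =>
    have happ : (Sop ^ (k+1)) x = Sop ((Sop ^ k) x) := by
      rw [pow_succ', ContinuousLinearMap.mul_apply]
    constructor
    · rw [happ]; exact Sop_negS ih.1
    · rw [happ]
      calc ‖Sop ((Sop ^ k) x)‖ ≤ (1/2) * ‖(Sop ^ k) x‖ := Sop_negS_norm ih.1
        _ ≤ (1/2) * ((1/2)^k * ‖x‖) := by
            exact mul_le_mul_of_nonneg_left ih.2 (by norm_num)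
        _ = (1/2)^(k+1) * ‖x‖ := by ring

lemma Top_pow_posS {x : H} (h : PosS x) (k : ℕ) :
    PosS ((Top ^ k) x) ∧ ‖(Top ^ k) x‖ ≤ (1/2)^k * ‖x‖ := by
  induction k with
  | zero =>
    have h0 : (Top ^ 0) x = x := by rw [pow_zero]; rfl
    rw [h0]; exact ⟨h, by norm_num⟩
  | succ k ih =>
    have happ : (Top ^ (k+1)) x = Top ((Top ^ k) x) := by
      rw [pow_succ', ContinuousLinearMap.mul_apply]
    constructor
    · rw [happ]; exact Top_posS ih.1
    · rw [happ]
      calc ‖Top ((Top ^ k) x)‖ ≤ (1/2) * ‖(Top ^ k) x‖ := Top_posS_norm ih.1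
        _ ≤ (1/2) * ((1/2)^k * ‖x‖) := by
            exact mul_le_mul_of_nonneg_left ih.2 (by norm_num)
        _ = (1/2)^(k+1) * ‖x‖ := by ring


lemma half_lt_one : (1/2 : ℝ) < 1 := by norm_num

set_option maxHeartbeats 1000000 in
lemma shadowing : ShadowingProperty U := by
  intro ε hε
  refine ⟨ε/4, by positivity, ?_⟩
  intro x hx
  have hδ0 : (0:ℝ) ≤ ε/4 := by positivity
  obtain ⟨z, hz⟩ : ∃ z : ℤ → H, ∀ n, z n = x (n+1) - Sop (x n) := ⟨_, fun _ => rfl⟩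
  have hznorm : ∀ n, ‖z n‖ ≤ ε/4 := by
    intro n; rw [hz n]; exact hx n
  have hAbound : ∀ (n : ℤ) (k : ℕ), ‖(Sop ^ k) (Pop (z (n - 1 - k)))‖ ≤ (1/2)^k * (ε/4) := by
    intro n k
    calc ‖(Sop ^ k) (Pop (z (n - 1 - k)))‖ ≤ (1/2)^k * ‖Pop (z (n - 1 - k))‖ :=
          (Sop_pow_negS (negS_Pop _) k).2
      _ ≤ (1/2)^k * (ε/4) := by
          refine mul_le_mul_of_nonneg_left ?_ (by positivity)
          exact le_trans (Pop_norm _) (hznorm _)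
  have hBbound : ∀ (n : ℤ) (k : ℕ), ‖(Top ^ (k+1)) (Qop (z (n + k)))‖ ≤ (1/2)^k * (ε/4) := by
    intro n k
    calc ‖(Top ^ (k+1)) (Qop (z (n + k)))‖ ≤ (1/2)^(k+1) * ‖Qop (z (n + k))‖ :=
          (Top_pow_posS (posS_Qop _) (k+1)).2
      _ ≤ (1/2)^k * (ε/4) := by
          have h1 : ((1:ℝ)/2)^(k+1) ≤ (1/2)^k := by
            apply pow_le_pow_of_le_one (by norm_num) (by norm_num)
            omega
          have h2 : ‖Qop (z (n + k))‖ ≤ ε/4 := le_trans (Qop_norm _) (hznorm _)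
          exact mul_le_mul h1 h2 (norm_nonneg _) (by positivity)
  have hgeo : Summable (fun k : ℕ => ((1:ℝ)/2)^k * (ε/4)) :=
    (summable_geometric_of_lt_one (by norm_num) half_lt_one).mul_right _
  have hgeo_sum : ∑' k : ℕ, ((1:ℝ)/2)^k * (ε/4) = 2 * (ε/4) := by
    rw [tsum_mul_right, tsum_geometric_of_lt_one (by norm_num) half_lt_one]
    norm_num [mul_comm]
  have hA : ∀ n : ℤ, Summable (fun k : ℕ => (Sop ^ k) (Pop (z (n - 1 - k)))) := fun n =>
    Summable.of_norm_bounded hgeo (hAbound n)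
  have hB : ∀ n : ℤ, Summable (fun k : ℕ => (Top ^ (k+1)) (Qop (z (n + k)))) := fun n =>
    Summable.of_norm_bounded hgeo (hBbound n)
  obtain ⟨A, hAdef⟩ : ∃ A : ℤ → H, ∀ n, A n = ∑' k : ℕ, (Sop ^ k) (Pop (z (n - 1 - k))) :=
    ⟨_, fun _ => rfl⟩
  obtain ⟨B, hBdef⟩ : ∃ B : ℤ → H, ∀ n, B n = ∑' k : ℕ, (Top ^ (k+1)) (Qop (z (n + k))) :=
    ⟨_, fun _ => rfl⟩
  have hcnorm : ∀ n, ‖A n - B n‖ ≤ 4 * (ε/4) := by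
    intro n
    have hAs : Summable (fun k : ℕ => ‖(Sop ^ k) (Pop (z (n - 1 - k)))‖) :=
      Summable.of_nonneg_of_le (fun k => norm_nonneg _) (hAbound n) hgeo
    have hBs : Summable (fun k : ℕ => ‖(Top ^ (k+1)) (Qop (z (n + k)))‖) :=
      Summable.of_nonneg_of_le (fun k => norm_nonneg _) (hBbound n) hgeo
    have hAn : ‖A n‖ ≤ 2 * (ε/4) := by
      rw [hAdef n]
      refine le_trans (norm_tsum_le_tsum_norm hAs) ?_
      rw [← hgeo_sum]
      exact Summable.tsum_le_tsum (hAbound n) hAs hgeo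
    have hBn : ‖B n‖ ≤ 2 * (ε/4) := by
      rw [hBdef n]
      refine le_trans (norm_tsum_le_tsum_norm hBs) ?_
      rw [← hgeo_sum]
      exact Summable.tsum_le_tsum (hBbound n) hBs hgeo
    calc ‖A n - B n‖ ≤ ‖A n‖ + ‖B n‖ := norm_sub_le _ _
      _ ≤ 2 * (ε/4) + 2 * (ε/4) := add_le_add hAn hBn
      _ = 4 * (ε/4) := by ring
  have hrecA : ∀ n : ℤ, A (n+1) = Pop (z n) + Sop (A n) := by
    intro n
    have h1 : A (n+1) = ∑' k : ℕ, (Sop ^ k) (Pop (z (n - k))) := by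
      rw [hAdef (n+1)]
      apply tsum_congr; intro k
      have harg : (n + 1 - 1 - (k:ℤ)) = n - k := by omega
      rw [harg]
    have h2 : Summable (fun k : ℕ => (Sop ^ k) (Pop (z (n - k)))) := by
      have hs := hA (n+1)
      apply hs.congr; intro k
      have harg : (n + 1 - 1 - (k:ℤ)) = n - k := by omega
      rw [harg]
    rw [h1, Summable.tsum_eq_zero_add h2]
    congr 1
    · show (Sop ^ 0) (Pop (z (n - (0:ℕ)))) = Pop (z n)
      norm_num
    · rw [hAdef n, ContinuousLinearMap.map_tsum Sop (hA n)]
      apply tsum_congr; intro k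
      have harg : n - ((k:ℤ)+1) = n - 1 - k := by omega
      rw [show ((k+1 : ℕ) : ℤ) = (k:ℤ)+1 by push_cast; ring, harg,
        pow_succ', ContinuousLinearMap.mul_apply]
  have hrecB : ∀ n : ℤ, B (n+1) = Sop (B n) - Qop (z n) := by
    intro n
    have h1 : Sop (B n) = ∑' k : ℕ, (Top ^ k) (Qop (z (n + k))) := by
      rw [hBdef n, ContinuousLinearMap.map_tsum Sop (hB n)]
      apply tsum_congr; intro k
      rw [pow_succ', ContinuousLinearMap.mul_apply, ← ContinuousLinearMap.mul_apply Sop Top,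
        show Sop * Top = 1 from U.val_inv, ContinuousLinearMap.one_apply]
    have h2 : Summable (fun k : ℕ => (Top ^ k) (Qop (z (n + k)))) := by
      rw [← summable_nat_add_iff 1]
      have h3 := hB (n+1)
      apply h3.congr; intro k
      have harg : (n + 1 + (k:ℤ)) = n + (k + 1 : ℕ) := by push_cast; ring
      rw [harg]
    have h4 : ∑' k : ℕ, (Top ^ k) (Qop (z (n + k)))
        = Qop (z n) + ∑' k : ℕ, (Top ^ (k+1)) (Qop (z (n + (k+1)))) := by
      rw [Summable.tsum_eq_zero_add h2]
      congr 1
      · show (Top ^ 0) (Qop (z (n + (0:ℕ)))) = Qop (z n)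
        norm_num
    have h5 : ∑' k : ℕ, (Top ^ (k+1)) (Qop (z (n + (k+1)))) = B (n+1) := by
      rw [hBdef (n+1)]
      apply tsum_congr; intro k
      have harg : (n + ((k:ℤ) + 1)) = n + 1 + k := by push_cast; ring
      rw [harg]
    rw [h1, h4, h5]
    abel
  have hstep : ∀ n : ℤ, x (n+1) - (A (n+1) - B (n+1)) = Sop (x n - (A n - B n)) := by
    intro n
    rw [hrecA n, hrecB n, map_sub]
    have key : x (n+1) - (Pop (z n) + Sop (A n) - (Sop (B n) - Qop (z n)))
        = (x (n+1) - (Pop (z n) + Qop (z n))) - Sop (A n) + Sop (B n) := by abel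
    rw [key, Pop_add_Qop (z n), hz n, map_sub]
    abel
  obtain ⟨y, hy⟩ : ∃ y : H, y = x 0 - (A 0 - B 0) := ⟨_, rfl⟩
  have horb : ∀ n : ℤ, x n - (A n - B n) = ((U ^ n : (H →L[ℂ] H)ˣ) : H →L[ℂ] H) y := by
    intro n
    induction n using Int.induction_on with
    | zero => rw [zpow_zero, Units.val_one, ContinuousLinearMap.one_apply, hy]
    | succ k ih =>
      have hU : ((U ^ ((k:ℤ)+1) : (H →L[ℂ] H)ˣ) : H →L[ℂ] H)
          = Sop * ((U ^ (k:ℤ) : (H →L[ℂ] H)ˣ) : H →L[ℂ] H) := by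
        rw [add_comm, zpow_add, zpow_one, Units.val_mul]
        rfl
      rw [hstep k, ih, hU, ContinuousLinearMap.mul_apply]
    | pred k ih =>
      have h1 := hstep (-(k:ℤ)-1)
      rw [show (-(k:ℤ)-1+1 : ℤ) = -(k:ℤ) by ring] at h1
      have h2 : x (-(k:ℤ)-1) - (A (-(k:ℤ)-1) - B (-(k:ℤ)-1))
          = Top (x (-(k:ℤ)) - (A (-(k:ℤ)) - B (-(k:ℤ)))) := by
        rw [h1, Top_Sop]
      have hU : ((U ^ (-(k:ℤ)-1) : (H →L[ℂ] H)ˣ) : H →L[ℂ] H)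
          = Top * ((U ^ (-(k:ℤ)) : (H →L[ℂ] H)ˣ) : H →L[ℂ] H) := by
        rw [sub_eq_add_neg, add_comm, zpow_add, zpow_neg_one, Units.val_mul]
        rfl
      rw [h2, ih, hU, ContinuousLinearMap.mul_apply]
  refine ⟨y, fun n => ?_⟩
  have h6 : x n - ((U ^ n : (H →L[ℂ] H)ˣ) : H →L[ℂ] H) y = A n - B n := by
    rw [← horb n]; abel
  rw [h6]
  calc ‖A n - B n‖ ≤ 4 * (ε/4) := hcnorm n
    _ = ε := by ring


lemma negS_e0 : NegS (e 0) := by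
  intro m hm; rw [e_apply, if_neg (by omega)]

lemma posS_e1 : PosS (e 1) := by
  intro m hm; rw [e_apply, if_neg (by omega)]

lemma Top_e0 : Top (e 0) = ((sq2⁻¹ : ℝ) : ℂ) • e 1 := by
  apply lp.ext; funext m
  rw [Top_apply, lp.coeFn_smul, Pi.smul_apply, e_apply, e_apply, smul_eq_mul]
  by_cases h : m = 1
  · rw [if_pos (by omega : m - 1 = 0), if_pos h, h]
    show (((w 1)⁻¹ : ℝ) : ℂ) * 1 = _
    rw [show w 1 = sq2 by unfold w; rw [if_pos (le_refl (1:ℤ))]]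
  · rw [if_neg (by omega : ¬ (m - 1 = 0)), if_neg h]
    ring

lemma posS_smul_e1 (a : ℂ) : PosS (a • e 1) := by
  intro m hm
  rw [lp.coeFn_smul, Pi.smul_apply, e_apply, if_neg (by omega), smul_zero]

lemma Sop_pow_e0_norm (n : ℕ) : ‖(Sop ^ n) (e 0)‖ ≤ (1/2)^n := by
  have := (Sop_pow_negS negS_e0 n).2
  rwa [e_norm 0, mul_one] at this

lemma Top_pow_e0_norm (n : ℕ) : ‖(Top ^ n) (e 0)‖ ≤ 1 := by
  cases n with
  | zero =>
    have h0 : (Top ^ 0) (e 0) = e 0 := by rw [pow_zero]; rfl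
    rw [h0, e_norm]
  | succ k =>
    have happ : (Top ^ (k+1)) (e 0) = (Top ^ k) (Top (e 0)) := by
      rw [pow_succ, ContinuousLinearMap.mul_apply]
    rw [happ, Top_e0]
    have hb := (Top_pow_posS (x := ((sq2⁻¹ : ℝ) : ℂ) • e 1) (posS_smul_e1 _) k).2
    have hnorm : ‖((sq2⁻¹ : ℝ) : ℂ) • e 1‖ ≤ 1/2 := by
      rw [norm_smul, e_norm, mul_one, Complex.norm_real, Real.norm_eq_abs,
        abs_of_pos (inv_pos.mpr sq2_pos)]
      exact sq2_inv_le
    calc ‖(Top ^ k) (((sq2⁻¹ : ℝ) : ℂ) • e 1)‖ ≤ (1/2)^k * ‖((sq2⁻¹ : ℝ) : ℂ) • e 1‖ := hb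
      _ ≤ 1 * (1/2) := by
          apply mul_le_mul _ hnorm (norm_nonneg _) (by norm_num)
          exact pow_le_one₀ (by norm_num) (by norm_num)
      _ ≤ 1 := by norm_num

lemma U_pow_val (n : ℕ) : ((U ^ (n:ℤ) : (H →L[ℂ] H)ˣ) : H →L[ℂ] H) = Sop ^ n := by
  rw [zpow_natCast, Units.val_pow_eq_pow_val]
  rfl

lemma U_pow_neg_val (n : ℕ) : ((U ^ (-(n:ℤ)) : (H →L[ℂ] H)ˣ) : H →L[ℂ] H) = Top ^ n := by
  rw [zpow_neg, zpow_natCast, ← inv_pow, Units.val_pow_eq_pow_val]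
  rfl

lemma not_ue : ¬ UniformlyExpansive U := by
  rintro ⟨n, hn, hx⟩
  rcases hx (e 0) (e_norm 0) with h | h
  · rw [U_pow_val] at h
    have h2 := Sop_pow_e0_norm n
    have h3 : ((1:ℝ)/2)^n ≤ 1 := pow_le_one₀ (by norm_num) (by norm_num)
    linarith
  · rw [U_pow_neg_val] at h
    have h2 := Top_pow_e0_norm n
    linarith

lemma pow_norm_tendsto_zero {A' : Type*} [NormedRing A'] [NormedAlgebra ℂ A'] [CompleteSpace A']
    (a : A') (h : spectralRadius ℂ a < 1) :
    Tendsto (fun n : ℕ => ‖a ^ n‖) atTop (𝓝 0) := by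
  obtain ⟨r, hr1, hr2⟩ := ENNReal.lt_iff_exists_nnreal_btwn.mp h
  have hg := spectrum.pow_nnnorm_pow_one_div_tendsto_nhds_spectralRadius a
  have hev : ∀ᶠ n : ℕ in atTop, ((‖a ^ n‖₊ : ℝ≥0∞)) ^ (1/(n:ℝ)) < (r : ℝ≥0∞) :=
    Filter.Tendsto.eventually_lt_const hr1 hg
  have hr2' : (r : ℝ) < 1 := by exact_mod_cast hr2
  apply squeeze_zero' (Filter.Eventually.of_forall fun n => norm_nonneg _)
    (g := fun n => (r:ℝ)^n) ?_
  · exact tendsto_pow_atTop_nhds_zero_of_lt_one r.coe_nonneg hr2'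
  · filter_upwards [hev, eventually_ge_atTop 1] with n h1 h2
    have hne : ((n:ℝ)) ≠ 0 := by positivity
    have h3 : (((‖a ^ n‖₊ : ℝ≥0∞)) ^ (1/(n:ℝ))) ^ ((n:ℕ):ℝ) ≤ (r : ℝ≥0∞) ^ ((n:ℕ):ℝ) :=
      ENNReal.rpow_le_rpow h1.le (by positivity)
    rw [← ENNReal.rpow_mul, one_div, inv_mul_cancel₀ hne, ENNReal.rpow_one,
      ENNReal.rpow_natCast, ← ENNReal.coe_pow] at h3
    have h5 : ‖a ^ n‖₊ ≤ r ^ n := by exact_mod_cast h3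
    calc ‖a ^ n‖ = ((‖a ^ n‖₊ : ℝ)) := rfl
      _ ≤ ((r ^ n : ℝ≥0) : ℝ) := by exact_mod_cast h5
      _ = (r:ℝ)^n := by push_cast; ring

lemma TS_pow (n : ℕ) (x : H) : (Top ^ n) ((Sop ^ n) x) = x := by
  induction n with
  | zero => rw [pow_zero, pow_zero]; rfl
  | succ k ih =>
    rw [show (Sop ^ (k+1)) x = Sop ((Sop ^ k) x) by rw [pow_succ']; rfl,
      show (Top ^ (k+1)) (Sop ((Sop ^ k) x)) = (Top ^ k) (Top (Sop ((Sop ^ k) x))) by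
        rw [pow_succ]; rfl,
      Top_Sop, ih]

lemma ST_pow (n : ℕ) (x : H) : (Sop ^ n) ((Top ^ n) x) = x := by
  induction n with
  | zero => rw [pow_zero, pow_zero]; rfl
  | succ k ih =>
    rw [show (Top ^ (k+1)) x = Top ((Top ^ k) x) by rw [pow_succ']; rfl,
      show (Sop ^ (k+1)) (Top ((Top ^ k) x)) = (Sop ^ k) (Sop (Top ((Top ^ k) x))) by
        rw [pow_succ]; rfl,
      Sop_Top, ih]


set_option maxHeartbeats 1600000 in
lemma not_hyp : ¬ Hyperbolic U := by
  rintro ⟨M, N, hMc, hNc, hcompl, hMinv, hNinv, Aop, Bop, hA, hB, hrA, hrB⟩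
  haveI : CompleteSpace M := hMc.completeSpace_coe
  haveI : CompleteSpace N := hNc.completeSpace_coe
  have hAt := pow_norm_tendsto_zero Aop hrA
  have hBt := pow_norm_tendsto_zero Bop hrB
  have hA' : ∀ u : M, ((Aop u : M) : H) = Sop (u : H) := hA
  have hB' : ∀ u : N, ((Bop u : N) : H) = Top (u : H) := hB
  have hSM : ∀ u : H, u ∈ M → Sop u ∈ M := by
    intro u hu
    have h1 : Sop u ∈ Submodule.map
        (((U : H →L[ℂ] H)) : H →ₗ[ℂ] H) M := ⟨u, hu, rfl⟩
    rwa [hMinv] at h1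
  have hSN : ∀ u : H, u ∈ N → Sop u ∈ N := by
    intro u hu
    have h1 : Sop u ∈ Submodule.map
        (((U : H →L[ℂ] H)) : H →ₗ[ℂ] H) N := ⟨u, hu, rfl⟩
    rwa [hNinv] at h1
  have hTM : ∀ u : H, u ∈ M → Top u ∈ M := by
    intro u hu
    rw [← hMinv] at hu
    obtain ⟨v, hv, hveq⟩ := hu
    have h2 : Top u = v := by rw [← hveq]; exact Top_Sop v
    rw [h2]; exact hv
  have hTMpow : ∀ (k : ℕ) (u : H), u ∈ M → (Top ^ k) u ∈ M := by
    intro k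
    induction k with
    | zero =>
      intro u hu
      have h0 : (Top ^ 0) u = u := by rw [pow_zero]; rfl
      rw [h0]; exact hu
    | succ k ih =>
      intro u hu
      have h0 : (Top ^ (k+1)) u = (Top ^ k) (Top u) := by rw [pow_succ]; rfl
      rw [h0]; exact ih _ (hTM u hu)
  have hSNpow : ∀ (k : ℕ) (u : H), u ∈ N → (Sop ^ k) u ∈ N := by
    intro k
    induction k with
    | zero =>
      intro u hu
      have h0 : (Sop ^ 0) u = u := by rw [pow_zero]; rfl
      rw [h0]; exact hu
    | succ k ih =>
      intro u hu
      have h0 : (Sop ^ (k+1)) u = (Sop ^ k) (Sop u) := by rw [pow_succ]; rfl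
      rw [h0]; exact ih _ (hSN u hu)
  have hApow : ∀ (k : ℕ) (u : M), (((Aop ^ k) u : M) : H) = (Sop ^ k) (u : H) := by
    intro k
    induction k with
    | zero => intro u; rw [pow_zero, pow_zero]; rfl
    | succ k ih =>
      intro u
      have h1 : (Aop ^ (k+1)) u = Aop ((Aop ^ k) u) := by rw [pow_succ']; rfl
      have h2 : (Sop ^ (k+1)) (u : H) = Sop ((Sop ^ k) (u : H)) := by rw [pow_succ']; rfl
      rw [h1, h2, hA' _, ih]
  have hBpow : ∀ (k : ℕ) (u : N), (((Bop ^ k) u : N) : H) = (Top ^ k) (u : H) := by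
    intro k
    induction k with
    | zero => intro u; rw [pow_zero, pow_zero]; rfl
    | succ k ih =>
      intro u
      have h1 : (Bop ^ (k+1)) u = Bop ((Bop ^ k) u) := by rw [pow_succ']; rfl
      have h2 : (Top ^ (k+1)) (u : H) = Top ((Top ^ k) (u : H)) := by rw [pow_succ']; rfl
      rw [h1, h2, hB' _, ih]
  obtain ⟨m, hm, v, hv, hmv⟩ := Submodule.mem_sup.mp
    (by rw [hcompl.sup_eq_top]; trivial : e 0 ∈ M ⊔ N)
  have hAnorm : ∀ k : ℕ, ‖(Sop ^ k) m‖ ≤ ‖Aop ^ k‖ * ‖m‖ := by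
    intro k
    have hc := hApow k ⟨m, hm⟩
    calc ‖(Sop ^ k) m‖ = ‖(Aop ^ k) (⟨m, hm⟩ : M)‖ := by
          rw [← hc, Submodule.norm_coe]
      _ ≤ ‖Aop ^ k‖ * ‖(⟨m, hm⟩ : M)‖ := ContinuousLinearMap.le_opNorm _ _
      _ = ‖Aop ^ k‖ * ‖m‖ := by
          congr 1
  have hv0 : v = 0 := by
    have key : ∀ k : ℕ, ‖v‖ ≤ ‖Bop ^ k‖ * ((1/2)^k + ‖Aop ^ k‖ * ‖m‖) := by
      intro k
      have hSv : (Sop ^ k) v ∈ N := hSNpow k v hv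
      have hcoe : (((Bop ^ k) (⟨(Sop ^ k) v, hSv⟩ : N) : N) : H) = v := by
        rw [hBpow k ⟨(Sop ^ k) v, hSv⟩]
        exact TS_pow k v
      have h1 : ‖v‖ ≤ ‖Bop ^ k‖ * ‖(Sop ^ k) v‖ := by
        calc ‖v‖ = ‖(Bop ^ k) (⟨(Sop ^ k) v, hSv⟩ : N)‖ := by
              conv_lhs => rw [← hcoe]
              exact Submodule.norm_coe _
          _ ≤ ‖Bop ^ k‖ * ‖(⟨(Sop ^ k) v, hSv⟩ : N)‖ := ContinuousLinearMap.le_opNorm _ _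
          _ = ‖Bop ^ k‖ * ‖(Sop ^ k) v‖ := by
              congr 1
      have h2 : ‖(Sop ^ k) v‖ ≤ (1/2)^k + ‖Aop ^ k‖ * ‖m‖ := by
        have hveq : v = e 0 - m := by rw [← hmv]; abel
        have h3 : (Sop ^ k) v = (Sop ^ k) (e 0) - (Sop ^ k) m := by rw [hveq, map_sub]
        rw [h3]
        calc ‖(Sop ^ k) (e 0) - (Sop ^ k) m‖ ≤ ‖(Sop ^ k) (e 0)‖ + ‖(Sop ^ k) m‖ :=
              norm_sub_le _ _
          _ ≤ (1/2)^k + ‖Aop ^ k‖ * ‖m‖ := add_le_add (Sop_pow_e0_norm k) (hAnorm k)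
      calc ‖v‖ ≤ ‖Bop ^ k‖ * ‖(Sop ^ k) v‖ := h1
        _ ≤ ‖Bop ^ k‖ * ((1/2)^k + ‖Aop ^ k‖ * ‖m‖) :=
            mul_le_mul_of_nonneg_left h2 (ContinuousLinearMap.opNorm_nonneg _)
    have htend : Tendsto (fun k : ℕ => ‖Bop ^ k‖ * ((1/2)^k + ‖Aop ^ k‖ * ‖m‖))
        atTop (𝓝 0) := by
      have h1 : Tendsto (fun k : ℕ => ((1:ℝ)/2)^k) atTop (𝓝 0) :=
        tendsto_pow_atTop_nhds_zero_of_lt_one (by norm_num) (by norm_num)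
      have h3 := hBt.mul (h1.add (hAt.mul_const ‖m‖))
      rw [show (0:ℝ) * (0 + 0 * ‖m‖) = 0 by ring] at h3
      exact h3
    have hle : ‖v‖ ≤ 0 := ge_of_tendsto htend (Filter.Eventually.of_forall key)
    exact norm_le_zero_iff.mp hle
  have he0 : e 0 = m := by rw [← hmv, hv0, add_zero]
  have hm' : (e 0 : H) ∈ M := he0 ▸ hm
  have key2 : ∀ k : ℕ, (1:ℝ) ≤ ‖Aop ^ k‖ * 1 := by
    intro k
    have hTk : (Top ^ k) (e 0) ∈ M := hTMpow k _ hm'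
    have hcoe : (((Aop ^ k) (⟨(Top ^ k) (e 0), hTk⟩ : M) : M) : H) = e 0 := by
      rw [hApow k ⟨(Top ^ k) (e 0), hTk⟩]
      exact ST_pow k (e 0)
    calc (1:ℝ) = ‖e 0‖ := (e_norm 0).symm
      _ = ‖(Aop ^ k) (⟨(Top ^ k) (e 0), hTk⟩ : M)‖ := by
          conv_lhs => rw [← hcoe]
          exact Submodule.norm_coe _
      _ ≤ ‖Aop ^ k‖ * ‖(⟨(Top ^ k) (e 0), hTk⟩ : M)‖ := ContinuousLinearMap.le_opNorm _ _
      _ = ‖Aop ^ k‖ * ‖(Top ^ k) (e 0)‖ := by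
          congr 1
      _ ≤ ‖Aop ^ k‖ * 1 :=
          mul_le_mul_of_nonneg_left (Top_pow_e0_norm k) (ContinuousLinearMap.opNorm_nonneg _)
  have htend2 : Tendsto (fun k : ℕ => ‖Aop ^ k‖ * 1) atTop (𝓝 0) := by
    have h := hAt.mul_const (1:ℝ)
    rw [show (0:ℝ) * 1 = 0 by ring] at h
    exact h
  have h10 : (1:ℝ) ≤ 0 := ge_of_tendsto htend2 (Filter.Eventually.of_forall key2)
  linarith

end BWS
/-- The bilateral weighted backward shift `S e_n = 2√2 e_{n-1}` (`n ≥ 1`),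
`S e_n = (2√2)⁻¹ e_{n-1}` (`n ≤ 0`) on `ℓ²(ℤ, ℂ)` is an invertible operator which has
the shadowing property but is neither uniformly expansive nor hyperbolic. -/
theorem backward_shift_shadowing_not_expansive_not_hyperbolic
    (S : lp (fun _ : ℤ => ℂ) 2 →L[ℂ] lp (fun _ : ℤ => ℂ) 2)
    (hS₁ : ∀ n : ℤ, 1 ≤ n → S (e n) = ((2 * Real.sqrt 2 : ℝ) : ℂ) • e (n - 1))
    (hS₂ : ∀ n : ℤ, n ≤ 0 → S (e n) = (((2 * Real.sqrt 2 : ℝ)⁻¹ : ℝ) : ℂ) • e (n - 1)) :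
    ∃ U : (lp (fun _ : ℤ => ℂ) 2 →L[ℂ] lp (fun _ : ℤ => ℂ) 2)ˣ,
      (U : lp (fun _ : ℤ => ℂ) 2 →L[ℂ] lp (fun _ : ℤ => ℂ) 2) = S ∧
      ShadowingProperty U ∧ ¬ UniformlyExpansive U ∧ ¬ Hyperbolic U := by
  have hS : ∀ n : ℤ, S (e n) = ((BWS.w n : ℝ) : ℂ) • e (n-1) := by
    intro n
    by_cases h : 1 ≤ n
    · rw [hS₁ n h]
      congr 2
      simp [BWS.w, BWS.sq2, h]
    · rw [hS₂ n (by omega)]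
      congr 2
      simp [BWS.w, BWS.sq2, h]
  have hSop : S = BWS.Sop := BWS.S_eq_Sop S hS
  refine ⟨BWS.U, ?_, BWS.shadowing, BWS.not_ue, BWS.not_hyp⟩
  rw [hSop]
  rfl
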